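/- arXiv:math/0309356 — 2 statements merged into one kernel-verified Lean document; each statement's English description precedes it below -/
import Mathlib

section
/- Let M be a compact metric space with Borel probability measure λ, V : M × M → ℝ continuous symmetric with ⟨Vg,g⟩_λ ≥ 0 for all g ∈ L²(λ) (a Mercer kernel). Suppose also that x ↦ ∫ V(x,y) dλ(y) is constant. Then f ≡ 1 is the unique continuous positive probability density satisfying f = ξ(Vf), i.e. λ is the unique fixed point of Π. -/
open MeasureTheory

/-- If `V` is a Mercer kernel (continuous, symmetric, positive semidefinite on
`L²(λ)`) and `x ↦ ∫ V(x,y) dλ(y)` is constant, then `f ≡ 1` is the unique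
continuous positive probability density with `f = ξ(Vf)`; i.e. `λ` is the
unique fixed point of `Π`. -/
theorem stmt4 {M : Type*} [MetricSpace M] [CompactSpace M] [MeasurableSpace M]
    [BorelSpace M] (lam : Measure M) [IsProbabilityMeasure lam]
    [lam.IsOpenPosMeasure]
    (V : M → M → ℝ) (hV : Continuous fun p : M × M => V p.1 p.2)
    (hsymm : ∀ x y, V x y = V y x)
    (hpos : ∀ g : M → ℝ, MemLp g 2 lam →
      0 ≤ ∫ x, ∫ y, V x y * g x * g y ∂lam ∂lam)
    (hconst : ∃ c : ℝ, ∀ x, (∫ y, V x y ∂lam) = c) :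
    ∀ f : M → ℝ, Continuous f → (∀ x, 0 < f x) → (∫ x, f x ∂lam) = 1 →
      (∀ x, f x = Real.exp (-(∫ y, V x y * f y ∂lam)) /
        ∫ y, Real.exp (-(∫ z, V y z * f z ∂lam)) ∂lam) →
      ∀ x, f x = 1 := by
  intro f hf hfpos hfint hfix x₀
  obtain ⟨c, hc⟩ := hconst
  -- every continuous function is integrable / in L²
  have cint : ∀ g : M → ℝ, Continuous g → Integrable g lam := fun g hg =>
    hg.integrable_of_hasCompactSupport (HasCompactSupport.of_compactSpace g)
  have cmem : ∀ g : M → ℝ, Continuous g → MemLp g 2 lam := fun g hg =>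
    hg.memLp_of_hasCompactSupport (HasCompactSupport.of_compactSpace g)
  have hVx : ∀ x : M, Continuous fun y => V x y := fun x =>
    hV.comp (Continuous.prodMk_right x)
  set Z := ∫ y, Real.exp (-(∫ z, V y z * f z ∂lam)) ∂lam with hZdef
  -- Z > 0
  have hZpos : 0 < Z := by
    have h := hfix x₀
    have hfp := hfpos x₀
    rw [h] at hfp
    rcases div_pos_iff.mp hfp with ⟨_, hz⟩ | ⟨habs, _⟩
    · exact hz
    · exact absurd habs (not_lt.mpr (Real.exp_pos _).le)
  -- closed form for Vf
  have hlog : ∀ x, (∫ y, V x y * f y ∂lam) = -(Real.log (f x) + Real.log Z) := by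
    intro x
    have h := hfix x
    have hfx := hfpos x
    have hZne : Z ≠ 0 := hZpos.ne'
    have hexp : Real.exp (-(∫ y, V x y * f y ∂lam)) = f x * Z := by
      field_simp [hZne] at h ⊢
      linarith [h]
    have := congrArg Real.log hexp
    rw [Real.log_exp, Real.log_mul hfx.ne' hZne] at this
    linarith
  -- inner integral against h = f - 1
  have hVh : ∀ x, (∫ y, V x y * (f y - 1) ∂lam)
      = -(Real.log (f x) + Real.log Z) - c := by
    intro x
    have h1 : Integrable (fun y => V x y * f y) lam := cint _ ((hVx x).mul hf)
    have h2 : Integrable (fun y => V x y) lam := cint _ (hVx x)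
    have : (∫ y, V x y * (f y - 1) ∂lam)
        = (∫ y, V x y * f y ∂lam) - ∫ y, V x y ∂lam := by
      rw [← integral_sub h1 h2]
      congr 1; funext y; ring
    rw [this, hlog x, hc x]
  -- ∫ (f - 1) = 0
  have hint0 : (∫ x, (f x - 1) ∂lam) = 0 := by
    rw [integral_sub (cint f hf) (integrable_const 1), hfint, integral_const]
    simp
  -- the key inequality from positive semidefiniteness
  have hkey : 0 ≤ ∫ x, ∫ y, V x y * (f x - 1) * (f y - 1) ∂lam ∂lam :=
    hpos _ (cmem _ (hf.sub continuous_const))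
  have hinner : ∀ x, (∫ y, V x y * (f x - 1) * (f y - 1) ∂lam)
      = (f x - 1) * (-(Real.log (f x) + Real.log Z) - c) := by
    intro x
    have : (fun y => V x y * (f x - 1) * (f y - 1))
        = fun y => (f x - 1) * (V x y * (f y - 1)) := by funext y; ring
    rw [this, integral_const_mul, hVh x]
  simp only [hinner] at hkey
  -- split the integral
  set A := ∫ x, (f x - 1) * Real.log (f x) ∂lam with hA
  have hcontlog : Continuous fun x => (f x - 1) * Real.log (f x) := by
    apply (hf.sub continuous_const).mul
    exact hf.log fun x => (hfpos x).ne'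
  have hsplit : (∫ x, (f x - 1) * (-(Real.log (f x) + Real.log Z) - c) ∂lam)
      = -A - (Real.log Z + c) * ∫ x, (f x - 1) ∂lam := by
    have e : (fun x => (f x - 1) * (-(Real.log (f x) + Real.log Z) - c))
        = fun x => -((f x - 1) * Real.log (f x)) - (Real.log Z + c) * (f x - 1) := by
      funext y; ring
    rw [e, integral_sub, integral_neg, integral_const_mul]
    · exact (cint _ hcontlog.neg)
    · exact cint _ (continuous_const.mul (hf.sub continuous_const))
  rw [hsplit, hint0, mul_zero, sub_zero] at hkey
  have hAle : A ≤ 0 := by linarith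
  have hptnn : ∀ x, 0 ≤ (f x - 1) * Real.log (f x) := by
    intro x
    rcases le_or_gt 1 (f x) with h | h
    · exact mul_nonneg (by linarith) (Real.log_nonneg h)
    · nlinarith [Real.log_nonpos (hfpos x).le h.le]
  have hAge : 0 ≤ A := integral_nonneg hptnn
  have hA0 : A = 0 := le_antisymm hAle hAge
  -- conclude the integrand is identically zero
  have hae : (fun x => (f x - 1) * Real.log (f x)) =ᵐ[lam] 0 :=
    (integral_eq_zero_iff_of_nonneg hptnn (cint _ hcontlog)).mp hA0
  have heq : (fun x => (f x - 1) * Real.log (f x)) = 0 :=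
    (hcontlog.ae_eq_iff_eq lam continuous_const).mp hae
  have h0 : (f x₀ - 1) * Real.log (f x₀) = 0 := congrFun heq x₀
  rcases mul_eq_zero.mp h0 with h | h
  · linarith
  · rcases Real.log_eq_zero.mp h with h | h | h
    · exact absurd h (hfpos x₀).ne'
    · exact h
    · nlinarith [hfpos x₀]
end

section
/- Let M be a compact metric space with Borel probability measure λ and V : M × M → ℝ continuous symmetric. Let J(f) = (1/2)⟨Vf, f⟩_λ + ⟨f, log f⟩_λ on {f ∈ C(M) : f > 0, ∫ f dλ = 1} and for each such f define K_f(g) = ⟨Vf, g⟩_λ + ⟨g, log g⟩_λ. Then along the flow of X(f) = −f + ξ(Vf), the derivative of J satisfies DJ(f)·X(f) = DK_f(f)·(ξ(Vf) − f) ≤ 0, with equality if and only if f = ξ(Vf). Hence J is a strict Lyapunov function for X. -/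
open MeasureTheory

/-- Along the vector field `X(f) = −f + ξ(Vf)`, the derivative of the free
energy satisfies `DJ(f)·X(f) = ⟨Vf + log f, ξ(Vf) − f⟩_λ ≤ 0`, with equality
if and only if `f = ξ(Vf)`: `J` is a strict Lyapunov function for `X`. -/
theorem stmt17 {M : Type*} [MetricSpace M] [CompactSpace M] [MeasurableSpace M]
    [BorelSpace M] (lam : Measure M) [IsProbabilityMeasure lam]
    [lam.IsOpenPosMeasure]
    (V : M → M → ℝ) (hV : Continuous fun p : M × M => V p.1 p.2)
    (hsymm : ∀ x y, V x y = V y x)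
    (f : M → ℝ) (hf : Continuous f) (hfpos : ∀ x, 0 < f x)
    (hfint : (∫ x, f x ∂lam) = 1) :
    (∫ x, ((∫ y, V x y * f y ∂lam) + Real.log (f x)) *
        ((Real.exp (-(∫ y, V x y * f y ∂lam)) /
            ∫ y, Real.exp (-(∫ z, V y z * f z ∂lam)) ∂lam) - f x) ∂lam) ≤ 0 ∧
    ((∫ x, ((∫ y, V x y * f y ∂lam) + Real.log (f x)) *
        ((Real.exp (-(∫ y, V x y * f y ∂lam)) /
            ∫ y, Real.exp (-(∫ z, V y z * f z ∂lam)) ∂lam) - f x) ∂lam) = 0 ↔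
      ∀ x, f x = Real.exp (-(∫ y, V x y * f y ∂lam)) /
        ∫ y, Real.exp (-(∫ z, V y z * f z ∂lam)) ∂lam) := by
  classical
  have hM : Nonempty M := by
    by_contra h
    haveI := not_nonempty_iff.1 h
    have h1 : lam Set.univ = 1 := measure_univ
    rw [Set.univ_eq_empty_iff.2 this, measure_empty] at h1
    exact zero_ne_one h1
  -- integrability of continuous functions on a compact space
  have integ : ∀ (u : M → ℝ), Continuous u → Integrable u lam := fun u hu =>
    hu.integrable_of_hasCompactSupport (HasCompactSupport.of_compactSpace u)
  set g : M → ℝ := fun x => ∫ y, V x y * f y ∂lam with hg_def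
  -- continuity of g
  have hg : Continuous g := by
    have : Continuous fun x => ∫ y in Set.univ, V x y * f y ∂lam := by
      apply continuous_parametric_integral_of_continuous
      · exact (hV.comp continuous_id).mul (hf.comp continuous_snd)
      · exact isCompact_univ
    simpa [Measure.restrict_univ] using this
  set Z : ℝ := ∫ y, Real.exp (-(g y)) ∂lam with hZ_def
  have hexp_cont : Continuous fun y => Real.exp (-(g y)) :=
    Real.continuous_exp.comp hg.neg
  -- Z > 0
  have hZpos : 0 < Z := by
    obtain ⟨x₀, -, hx₀⟩ :=
      isCompact_univ.exists_isMinOn (Set.univ_nonempty)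
        (hexp_cont.continuousOn (s := Set.univ))
    have hc : 0 < Real.exp (-(g x₀)) := Real.exp_pos _
    have hle : ∀ y, Real.exp (-(g x₀)) ≤ Real.exp (-(g y)) := fun y =>
      hx₀ (Set.mem_univ y)
    calc (0 : ℝ) < Real.exp (-(g x₀)) := hc
      _ = ∫ _, Real.exp (-(g x₀)) ∂lam := by simp
      _ ≤ Z := integral_mono (integrable_const _) (integ _ hexp_cont) hle
  set xi : M → ℝ := fun x => Real.exp (-(g x)) / Z with hxi_def
  have hxi_cont : Continuous xi := hexp_cont.div_const Z
  have hxi_pos : ∀ x, 0 < xi x := fun x => div_pos (Real.exp_pos _) hZpos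
  have hxi_int : (∫ x, xi x ∂lam) = 1 := by
    simp only [hxi_def]
    rw [integral_div]
    exact div_self hZpos.ne'
  -- log xi x = -(g x) - log Z
  have hlogxi : ∀ x, Real.log (xi x) = -(g x) - Real.log Z := fun x => by
    rw [hxi_def, Real.log_div (Real.exp_pos _).ne' hZpos.ne', Real.log_exp]
  -- pointwise identity
  have hpt : ∀ x, (g x + Real.log (f x)) * (xi x - f x) =
      (Real.log (f x) - Real.log (xi x)) * (xi x - f x)
        - Real.log Z * (xi x - f x) := by
    intro x
    rw [hlogxi x]; ring
  -- the nonpositive part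
  set A : M → ℝ := fun x => (Real.log (f x) - Real.log (xi x)) * (xi x - f x)
    with hA_def
  have hlogf_cont : Continuous fun x => Real.log (f x) :=
    hf.log fun x => (hfpos x).ne'
  have hlogxi_cont : Continuous fun x => Real.log (xi x) :=
    hxi_cont.log fun x => (hxi_pos x).ne'
  have hA_cont : Continuous A :=
    ((hlogf_cont.sub hlogxi_cont).mul (hxi_cont.sub hf))
  have hA_nonpos : ∀ x, A x ≤ 0 := by
    intro x
    rcases lt_trichotomy (f x) (xi x) with h | h | h
    · have h1 : Real.log (f x) - Real.log (xi x) < 0 :=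
        sub_neg.2 (Real.log_lt_log (hfpos x) h)
      have h2 : 0 < xi x - f x := sub_pos.2 h
      exact le_of_lt (mul_neg_of_neg_of_pos h1 h2)
    · simp [hA_def, h]
    · have h1 : 0 < Real.log (f x) - Real.log (xi x) :=
        sub_pos.2 (Real.log_lt_log (hxi_pos x) h)
      have h2 : xi x - f x < 0 := sub_neg.2 h
      exact le_of_lt (mul_neg_of_pos_of_neg h1 h2)
  have hA_eq_iff : ∀ x, A x = 0 ↔ f x = xi x := by
    intro x
    constructor
    · intro h0
      by_contra hne
      rcases lt_or_gt_of_ne hne with h | h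
      · have h1 : Real.log (f x) - Real.log (xi x) < 0 :=
          sub_neg.2 (Real.log_lt_log (hfpos x) h)
        have h2 : 0 < xi x - f x := sub_pos.2 h
        exact absurd h0 (mul_neg_of_neg_of_pos h1 h2).ne
      · have h1 : 0 < Real.log (f x) - Real.log (xi x) :=
          sub_pos.2 (Real.log_lt_log (hxi_pos x) h)
        have h2 : xi x - f x < 0 := sub_neg.2 h
        exact absurd h0 (mul_neg_of_pos_of_neg h1 h2).ne
    · intro h; simp [hA_def, h]
  -- rewrite the main integral
  have hxif_int : Integrable (fun x => xi x - f x) lam := integ _ (hxi_cont.sub hf)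
  have hint_sub : (∫ x, (xi x - f x) ∂lam) = 0 := by
    rw [integral_sub (integ _ hxi_cont) (integ _ hf), hxi_int, hfint, sub_self]
  have hmain : (∫ x, (g x + Real.log (f x)) * (xi x - f x) ∂lam)
      = ∫ x, A x ∂lam := by
    have : (∫ x, (g x + Real.log (f x)) * (xi x - f x) ∂lam)
        = ∫ x, (A x - Real.log Z * (xi x - f x)) ∂lam := by
      congr 1; funext x; exact hpt x
    rw [this, integral_sub (integ _ hA_cont) (hxif_int.const_mul _),
      integral_const_mul, hint_sub, mul_zero, sub_zero]
  have hA_int_nonpos : (∫ x, A x ∂lam) ≤ 0 := by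
    apply integral_nonpos
    exact hA_nonpos
  show (∫ x, (g x + Real.log (f x)) * (xi x - f x) ∂lam) ≤ 0 ∧
    ((∫ x, (g x + Real.log (f x)) * (xi x - f x) ∂lam) = 0 ↔ ∀ x, f x = xi x)
  refine ⟨by rw [hmain]; exact hA_int_nonpos, ?_⟩
  constructor
  · intro h0
    have hA0 : (∫ x, A x ∂lam) = 0 := by rw [← hmain]; exact h0
    have h1 : (∫ x, -A x ∂lam) = 0 := by rw [integral_neg, hA0, neg_zero]
    have h2 : (fun x => -A x) =ᵐ[lam] 0 := by
      rw [← integral_eq_zero_iff_of_nonneg (fun x => neg_nonneg.2 (hA_nonpos x))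
        ((integ _ hA_cont).neg)]
      exact h1
    have h3 : (fun x => -A x) = 0 :=
      (Continuous.ae_eq_iff_eq lam hA_cont.neg continuous_const).1 h2
    intro x
    have hx : A x = 0 := by
      have := congrFun h3 x
      simpa using this
    exact (hA_eq_iff x).1 hx
  · intro hfx
    have hz : ∀ x, (g x + Real.log (f x)) * (xi x - f x) = 0 := by
      intro x
      have : xi x - f x = 0 := by rw [hfx x]; ring
      rw [this, mul_zero]
    calc (∫ x, (g x + Real.log (f x)) * (xi x - f x) ∂lam)
        = ∫ _, (0 : ℝ) ∂lam := by congr 1; funext x; exact hz x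
      _ = 0 := integral_zero _ _
end
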